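/- Let A be a ring and I a two-sided idempotent ideal of A such that {a ∈ A : aI = 0} = 0 and such that ann_M(I) is a direct summand of M for every right A-module M. Then every right ideal of the quotient ring A/I is projective as a right A/I-module, i.e., A/I is right hereditary. -/

import Mathlib

open MulOpposite

variable (A : Type) [Ring A]

/-- `ann_M(I) = {m ∈ M | m·a = 0 for all a ∈ I}` as a submodule of the right `A`-module `M`. -/
def rAnn (I : Ideal A) (M : Type) [AddCommGroup M] [Module Aᵐᵒᵖ M] :
    Submodule Aᵐᵒᵖ M where
  carrier := {m : M | ∀ a ∈ I, op a • m = 0}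
  add_mem' := by
    intro x y hx hy a ha
    rw [smul_add, hx a ha, hy a ha, add_zero]
  zero_mem' := by
    intro a _
    rw [smul_zero]
  smul_mem' := by
    intro c m hm a ha
    rw [smul_smul]
    have h1 : op a * c = op (c.unop * a) := by
      rw [op_mul, op_unop]
    rw [h1]
    exact hm (c.unop * a) (I.mul_mem_left c.unop ha)

/-- The ring congruence attached to a two-sided ideal `I` of `A`; its quotient is the
quotient ring `A/I`. -/
def idealCon (I : Ideal A) (hright : ∀ a ∈ I, ∀ b : A, a * b ∈ I) : RingCon A where
  r a b := a - b ∈ I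
  iseqv := by
    refine ⟨fun a => by simpa using I.zero_mem, fun {a b} h => ?_, fun {a b c} h h' => ?_⟩
    · have := I.neg_mem h
      rwa [neg_sub] at this
    · have := I.add_mem h h'
      rwa [sub_add_sub_cancel] at this
  mul' := by
    intro w x y z h h'
    show w * y - x * z ∈ I
    have h1 : (w - x) * y ∈ I := hright _ h y
    have h2 : x * (y - z) ∈ I := by simpa [smul_eq_mul] using I.smul_mem x h'
    have h3 := I.add_mem h1 h2
    have heq : (w - x) * y + x * (y - z) = w * y - x * z := by noncomm_ring
    rwa [heq] at h3
  add' := by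
    intro w x y z h h'
    show w + y - (x + z) ∈ I
    have h3 := I.add_mem h h'
    have heq : w - x + (y - z) = w + y - (x + z) := by abel
    rwa [heq] at h3

namespace Stmt15

variable (I : Ideal A) (hright : ∀ a ∈ I, ∀ b : A, a * b ∈ I)

theorem coe_zero_iff (a : A) : ((a : (idealCon A I hright).Quotient)) = 0 ↔ a ∈ I := by
  rw [show (0 : (idealCon A I hright).Quotient) = ((0 : A) : (idealCon A I hright).Quotient)
    from rfl, RingCon.eq]
  show a - 0 ∈ I ↔ a ∈ I
  rw [sub_zero]

/-- The quotient map `Aᵐᵒᵖ →+* (A/I)ᵐᵒᵖ`. -/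
def τ : Aᵐᵒᵖ →+* ((idealCon A I hright).Quotient)ᵐᵒᵖ :=
  RingHom.op (idealCon A I hright).mk'

@[simp] theorem τ_apply (r : Aᵐᵒᵖ) :
    τ A I hright r = op ((r.unop : (idealCon A I hright).Quotient)) := rfl

theorem τ_eq_zero {a : A} (ha : a ∈ I) : τ A I hright (op a) = 0 := by
  rw [τ_apply, unop_op, (coe_zero_iff A I hright a).2 ha, op_zero]

variable (𝔟 : Submodule ((idealCon A I hright).Quotient)ᵐᵒᵖ (idealCon A I hright).Quotient)

/-- The preimage of `𝔟` in `A`, as a right ideal (= left ideal of `Aᵐᵒᵖ`). -/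
def Jmod : Submodule Aᵐᵒᵖ Aᵐᵒᵖ where
  carrier := {r | ((r.unop : (idealCon A I hright).Quotient)) ∈ 𝔟}
  add_mem' {x y} hx hy := by
    simp only [Set.mem_setOf_eq, unop_add, RingCon.coe_add]
    exact 𝔟.add_mem hx hy
  zero_mem' := by
    simp only [Set.mem_setOf_eq, unop_zero, RingCon.coe_zero]
    exact 𝔟.zero_mem
  smul_mem' c x hx := by
    simp only [Set.mem_setOf_eq, smul_eq_mul, unop_mul, RingCon.coe_mul]
    have := 𝔟.smul_mem (op ((c.unop : (idealCon A I hright).Quotient))) hx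
    rwa [op_smul_eq_mul] at this

theorem mem_Jmod_of_mem {a : A} (ha : a ∈ I) : op a ∈ Jmod A I hright 𝔟 := by
  show (((op a).unop : (idealCon A I hright).Quotient)) ∈ 𝔟
  rw [unop_op, (coe_zero_iff A I hright a).2 ha]
  exact 𝔟.zero_mem

/-- Free right `A`-module on the elements of `J`. -/
abbrev F := (Jmod A I hright 𝔟 →₀ Aᵐᵒᵖ)

/-- The natural map `F → A` with image `J`. -/
noncomputable def q : F A I hright 𝔟 →ₗ[Aᵐᵒᵖ] Aᵐᵒᵖ :=
  Finsupp.linearCombination Aᵐᵒᵖ (fun j : Jmod A I hright 𝔟 => (j : Aᵐᵒᵖ))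

theorem q_mem (f : F A I hright 𝔟) : q A I hright 𝔟 f ∈ Jmod A I hright 𝔟 := by
  have h : LinearMap.range (q A I hright 𝔟) ≤ Jmod A I hright 𝔟 := by
    rw [q, Finsupp.range_linearCombination, Submodule.span_le]
    rintro x ⟨j, rfl⟩
    exact j.2
  exact h ⟨f, rfl⟩

/-- The submodule `ker(q)·I`. -/
noncomputable def LI : Submodule Aᵐᵒᵖ (F A I hright 𝔟) :=
  Submodule.span Aᵐᵒᵖ
    {x | ∃ a ∈ I, ∃ y ∈ LinearMap.ker (q A I hright 𝔟), x = op a • y}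

theorem LI_le_ker : LI A I hright 𝔟 ≤ LinearMap.ker (q A I hright 𝔟) := by
  rw [LI, Submodule.span_le]
  rintro x ⟨a, _, y, hy, rfl⟩
  simp only [SetLike.mem_coe, LinearMap.mem_ker, map_smul]
  rw [LinearMap.mem_ker.1 hy, smul_zero]

/-- The key module `M = F/(ker q)I`. -/
abbrev Mq := F A I hright 𝔟 ⧸ LI A I hright 𝔟

/-- `q` descends to `M`. -/
noncomputable def qbar : Mq A I hright 𝔟 →ₗ[Aᵐᵒᵖ] Aᵐᵒᵖ :=
  (LI A I hright 𝔟).liftQ (q A I hright 𝔟) (LI_le_ker A I hright 𝔟)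

@[simp] theorem qbar_mk (f : F A I hright 𝔟) :
    qbar A I hright 𝔟 (Submodule.Quotient.mk f) = q A I hright 𝔟 f := rfl

theorem qbar_mem (m : Mq A I hright 𝔟) : qbar A I hright 𝔟 m ∈ Jmod A I hright 𝔟 := by
  obtain ⟨f, rfl⟩ := Submodule.Quotient.mk_surjective _ m
  rw [qbar_mk]
  exact q_mem A I hright 𝔟 f

/-- Free right `A/I`-module on the elements of `J`. -/
abbrev FS := (Jmod A I hright 𝔟 →₀ ((idealCon A I hright).Quotient)ᵐᵒᵖ)

/-- Reduction of coefficients mod `I`, a semilinear map `F → FS`. -/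
noncomputable def ρF : F A I hright 𝔟 →ₛₗ[τ A I hright] FS A I hright 𝔟 where
  toFun := Finsupp.mapRange (τ A I hright) (map_zero _)
  map_add' f g := Finsupp.mapRange_add (map_add _) f g
  map_smul' r f := by
    ext j
    simp [Finsupp.mapRange_apply, smul_eq_mul, map_mul]

theorem LI_le_ker_ρF : LI A I hright 𝔟 ≤ LinearMap.ker (ρF A I hright 𝔟) := by
  rw [LI, Submodule.span_le]
  rintro x ⟨a, ha, y, _, rfl⟩
  simp only [SetLike.mem_coe, LinearMap.mem_ker]
  rw [LinearMap.map_smulₛₗ, τ_eq_zero A I hright ha, zero_smul]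

/-- Reduction mod `I` on `M`. -/
noncomputable def ρM : Mq A I hright 𝔟 →ₛₗ[τ A I hright] FS A I hright 𝔟 :=
  (LI A I hright 𝔟).liftQ (ρF A I hright 𝔟) (LI_le_ker_ρF A I hright 𝔟)

@[simp] theorem ρM_mk (f : F A I hright 𝔟) :
    ρM A I hright 𝔟 (Submodule.Quotient.mk f) = ρF A I hright 𝔟 f := rfl

/-- `qbar` corestricted to `J`, restricted to a submodule `N'`. -/
noncomputable def qN (N' : Submodule Aᵐᵒᵖ (Mq A I hright 𝔟)) : N' →ₗ[Aᵐᵒᵖ] Jmod A I hright 𝔟 :=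
  LinearMap.codRestrict _ ((qbar A I hright 𝔟).comp N'.subtype)
    (fun n => qbar_mem A I hright 𝔟 n)

@[simp] theorem qN_apply (N' : Submodule Aᵐᵒᵖ (Mq A I hright 𝔟)) (n : N') :
    (qN A I hright 𝔟 N' n : Aᵐᵒᵖ) = qbar A I hright 𝔟 (n : Mq A I hright 𝔟) := rfl

/-- The lifting `J → M` landing in `N'`. -/
noncomputable def sigma (N' : Submodule Aᵐᵒᵖ (Mq A I hright 𝔟))
    (hbij : Function.Bijective (qN A I hright 𝔟 N')) :
    Jmod A I hright 𝔟 →ₗ[Aᵐᵒᵖ] Mq A I hright 𝔟 :=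
  N'.subtype.comp (LinearEquiv.ofBijective _ hbij).symm.toLinearMap

theorem qbar_sigma (N' : Submodule Aᵐᵒᵖ (Mq A I hright 𝔟))
    (hbij : Function.Bijective (qN A I hright 𝔟 N')) (j : Jmod A I hright 𝔟) :
    qbar A I hright 𝔟 (sigma A I hright 𝔟 N' hbij j) = (j : Aᵐᵒᵖ) := by
  have h1 : qN A I hright 𝔟 N' ((LinearEquiv.ofBijective _ hbij).symm j) = j := by
    have := (LinearEquiv.ofBijective _ hbij).apply_symm_apply j
    rwa [LinearEquiv.ofBijective_apply] at this
  calc qbar A I hright 𝔟 (sigma A I hright 𝔟 N' hbij j)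
      = (qN A I hright 𝔟 N' ((LinearEquiv.ofBijective _ hbij).symm j) : Aᵐᵒᵖ) := rfl
    _ = (j : Aᵐᵒᵖ) := by rw [h1]

/-- The natural map `J → 𝔟`. -/
def g (j : Jmod A I hright 𝔟) : 𝔟 := ⟨(((j : Aᵐᵒᵖ).unop : (idealCon A I hright).Quotient)), j.2⟩

theorem g_surj : Function.Surjective (g A I hright 𝔟) := by
  intro b
  obtain ⟨a, ha⟩ := Quotient.exists_rep (b : (idealCon A I hright).Quotient)
  refine ⟨⟨op a, ?_⟩, ?_⟩
  · show ((a : (idealCon A I hright).Quotient)) ∈ 𝔟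
    rw [show ((a : (idealCon A I hright).Quotient)) = b from ha]
    exact b.2
  · exact Subtype.ext ha

end Stmt15


open Stmt15

/-- let `I` be a two-sided idempotent ideal of `A` with zero left
annihilator such that `ann_M(I)` is a direct summand of every right `A`-module `M`.
Then every right ideal of the quotient ring `A/I` is projective as a right `A/I`-module,
i.e. `A/I` is right hereditary. -/
theorem stmt_15 (I : Ideal A)
    (hright : ∀ a ∈ I, ∀ b : A, a * b ∈ I)
    (hidem : ∀ a ∈ I, a ∈ AddSubgroup.closure {x : A | ∃ b ∈ I, ∃ c ∈ I, x = b * c})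
    (hlann : ∀ a : A, (∀ x ∈ I, a * x = 0) → a = 0)
    (hsplit : ∀ (M : Type) [AddCommGroup M] [Module Aᵐᵒᵖ M],
      ∃ N' : Submodule Aᵐᵒᵖ M, rAnn A I M ⊓ N' = ⊥ ∧ rAnn A I M ⊔ N' = ⊤) :
    ∀ 𝔟 : Submodule (idealCon A I hright).Quotientᵐᵒᵖ (idealCon A I hright).Quotient,
      Module.Projective (idealCon A I hright).Quotientᵐᵒᵖ 𝔟 := by
  intro 𝔟
  obtain ⟨N', hinf, hsup⟩ := hsplit (Mq A I hright 𝔟)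
  have hann_sub : ∀ m ∈ rAnn A I (Mq A I hright 𝔟), qbar A I hright 𝔟 m = 0 := by
    intro m hm
    obtain ⟨f, rfl⟩ := Submodule.Quotient.mk_surjective _ m
    have h1 : ∀ x ∈ I, (q A I hright 𝔟 f).unop * x = 0 := by
      intro x hx
      have h2 : op x • (Submodule.Quotient.mk f : Mq A I hright 𝔟) = 0 := hm x hx
      rw [← Submodule.Quotient.mk_smul, Submodule.Quotient.mk_eq_zero] at h2
      have h3 : q A I hright 𝔟 (op x • f) = 0 := LI_le_ker A I hright 𝔟 h2
      rw [map_smul] at h3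
      have h4 := congrArg unop h3
      simpa [smul_eq_mul] using h4
    have h5 := hlann _ h1
    rw [qbar_mk, ← op_unop (q A I hright 𝔟 f), h5, op_zero]
  have hker_sub : ∀ m : Mq A I hright 𝔟, qbar A I hright 𝔟 m = 0 →
      m ∈ rAnn A I (Mq A I hright 𝔟) := by
    intro m hm
    obtain ⟨f, rfl⟩ := Submodule.Quotient.mk_surjective _ m
    rw [qbar_mk] at hm
    intro a ha
    rw [← Submodule.Quotient.mk_smul, Submodule.Quotient.mk_eq_zero]
    exact Submodule.subset_span ⟨a, ha, f, LinearMap.mem_ker.2 hm, rfl⟩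
  have hbij : Function.Bijective (qN A I hright 𝔟 N') := by
    constructor
    · have hz : ∀ n : N', qN A I hright 𝔟 N' n = 0 → n = 0 := by
        intro n hn
        have h1 : qbar A I hright 𝔟 (n : Mq A I hright 𝔟) = 0 := by
          have h0 := congrArg Subtype.val hn
          rw [qN_apply] at h0
          simpa using h0
        have h2 : (n : Mq A I hright 𝔟) ∈ rAnn A I (Mq A I hright 𝔟) ⊓ N' :=
          ⟨hker_sub _ h1, n.2⟩
        rw [hinf] at h2
        exact Subtype.ext ((Submodule.mem_bot _).1 h2)
      intro x y hxy
      have h := hz (x - y) (by rw [map_sub, hxy, sub_self])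
      rwa [sub_eq_zero] at h
    · intro j
      have hmem : (Submodule.Quotient.mk (Finsupp.single j (1:Aᵐᵒᵖ)) : Mq A I hright 𝔟)
          ∈ rAnn A I (Mq A I hright 𝔟) ⊔ N' := by rw [hsup]; exact Submodule.mem_top
      obtain ⟨y, hy, z, hz, hyz⟩ := Submodule.mem_sup.1 hmem
      refine ⟨⟨z, hz⟩, Subtype.ext ?_⟩
      rw [qN_apply]
      have hq1 : qbar A I hright 𝔟
          (Submodule.Quotient.mk (Finsupp.single j (1:Aᵐᵒᵖ))) = (j : Aᵐᵒᵖ) := by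
        rw [qbar_mk]
        simp [q, Finsupp.linearCombination_single]
      rw [← hyz, map_add, hann_sub y hy, zero_add] at hq1
      exact hq1
  set σ := sigma A I hright 𝔟 N' hbij with hσ
  set i0 : Jmod A I hright 𝔟 → FS A I hright 𝔟 := fun j => ρM A I hright 𝔟 (σ j) with hi0
  have hi0_add : ∀ j j', i0 (j + j') = i0 j + i0 j' := by
    intro j j'; simp only [hi0, map_add]
  have hi0_sub : ∀ j j', i0 (j - j') = i0 j - i0 j' := by
    intro j j'; simp only [hi0, map_sub]
  have hi0_smul : ∀ (r : Aᵐᵒᵖ) j, i0 (r • j) = τ A I hright r • i0 j := by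
    intro r j; simp only [hi0, map_smul, LinearMap.map_smulₛₗ]
  have hI0 : ∀ x : A, x ∈ AddSubgroup.closure {x : A | ∃ b ∈ I, ∃ c ∈ I, x = b * c} →
      x ∈ I ∧ ∀ h : op x ∈ Jmod A I hright 𝔟, i0 ⟨op x, h⟩ = 0 := by
    intro x hx
    refine AddSubgroup.closure_induction
      (p := fun x _ => x ∈ I ∧ ∀ h : op x ∈ Jmod A I hright 𝔟, i0 ⟨op x, h⟩ = 0)
      ?_ ?_ ?_ ?_ hx
    · rintro x ⟨b, hb, c, hc, rfl⟩
      refine ⟨hright b hb c, fun h => ?_⟩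
      have hbJ : op b ∈ Jmod A I hright 𝔟 := mem_Jmod_of_mem A I hright 𝔟 hb
      have heq : (⟨op (b*c), h⟩ : Jmod A I hright 𝔟)
          = op c • (⟨op b, hbJ⟩ : Jmod A I hright 𝔟) := by
        apply Subtype.ext
        simp [op_mul, smul_eq_mul]
      rw [heq, hi0_smul, τ_eq_zero A I hright hc, zero_smul]
    · refine ⟨I.zero_mem, fun h => ?_⟩
      have heq : (⟨op (0:A), h⟩ : Jmod A I hright 𝔟) = 0 := Subtype.ext (by simp)
      rw [heq]
      simp only [hi0, map_zero]
    · rintro x y hx' hy' ⟨hxI, ihx⟩ ⟨hyI, ihy⟩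
      refine ⟨I.add_mem hxI hyI, fun h => ?_⟩
      have hxJ := mem_Jmod_of_mem A I hright 𝔟 hxI
      have hyJ := mem_Jmod_of_mem A I hright 𝔟 hyI
      have heq : (⟨op (x+y), h⟩ : Jmod A I hright 𝔟)
          = ⟨op x, hxJ⟩ + ⟨op y, hyJ⟩ := Subtype.ext (by simp)
      rw [heq, hi0_add, ihx hxJ, ihy hyJ, add_zero]
    · rintro x hx' ⟨hxI, ihx⟩
      refine ⟨I.neg_mem hxI, fun h => ?_⟩
      have hxJ := mem_Jmod_of_mem A I hright 𝔟 hxI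
      have heq : (⟨op (-x), h⟩ : Jmod A I hright 𝔟) = -⟨op x, hxJ⟩ := Subtype.ext (by simp)
      rw [heq]
      have hneg : i0 (-(⟨op x, hxJ⟩ : Jmod A I hright 𝔟)) = - i0 ⟨op x, hxJ⟩ := by
        simp only [hi0, map_neg]
      rw [hneg, ihx hxJ, neg_zero]
  have hind : ∀ j j' : Jmod A I hright 𝔟,
      g A I hright 𝔟 j = g A I hright 𝔟 j' → i0 j = i0 j' := by
    intro j j' hg
    have h1 : (((j : Aᵐᵒᵖ).unop : (idealCon A I hright).Quotient))
        = (((j' : Aᵐᵒᵖ).unop : (idealCon A I hright).Quotient)) := congrArg Subtype.val hg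
    rw [RingCon.eq] at h1
    have h2 : (j : Aᵐᵒᵖ).unop - (j' : Aᵐᵒᵖ).unop ∈ I := h1
    obtain ⟨-, h3⟩ := hI0 _ (hidem _ h2)
    have hJd : op ((j : Aᵐᵒᵖ).unop - (j' : Aᵐᵒᵖ).unop) ∈ Jmod A I hright 𝔟 := by
      have heq : op ((j : Aᵐᵒᵖ).unop - (j' : Aᵐᵒᵖ).unop) = (j : Aᵐᵒᵖ) - (j' : Aᵐᵒᵖ) := by simp
      rw [heq]; exact sub_mem j.2 j'.2
    have h4 := h3 hJd
    have heq : (⟨op ((j : Aᵐᵒᵖ).unop - (j' : Aᵐᵒᵖ).unop), hJd⟩ : Jmod A I hright 𝔟)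
        = j - j' := Subtype.ext (by simp)
    rw [heq, hi0_sub] at h4
    exact sub_eq_zero.1 h4
  choose sec hsec using g_surj A I hright 𝔟
  set i1 : 𝔟 → FS A I hright 𝔟 := fun b => i0 (sec b) with hi1
  have hg_add : ∀ j j', g A I hright 𝔟 (j + j') = g A I hright 𝔟 j + g A I hright 𝔟 j' := by
    intro j j'
    apply Subtype.ext
    simp [g]
  have hadd : ∀ b b' : 𝔟, i1 (b + b') = i1 b + i1 b' := by
    intro b b'
    have h1 : g A I hright 𝔟 (sec (b+b')) = g A I hright 𝔟 (sec b + sec b') := by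
      rw [hg_add, hsec, hsec, hsec]
    calc i1 (b + b') = i0 (sec b + sec b') := hind _ _ h1
      _ = i1 b + i1 b' := hi0_add _ _
  have hsmul : ∀ (s : ((idealCon A I hright).Quotient)ᵐᵒᵖ) (b : 𝔟),
      i1 (s • b) = s • i1 b := by
    intro s b
    obtain ⟨c, hc⟩ := Quotient.exists_rep s.unop
    have hc' : ((c : (idealCon A I hright).Quotient)) = s.unop := hc
    have hgs : g A I hright 𝔟 (op c • sec b) = s • b := by
      apply Subtype.ext
      show ((((op c • sec b : Jmod A I hright 𝔟) : Aᵐᵒᵖ).unop :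
        (idealCon A I hright).Quotient)) = ((s • b : 𝔟) : (idealCon A I hright).Quotient)
      rw [Submodule.coe_smul, smul_eq_mul, unop_mul, unop_op, RingCon.coe_mul]
      have hb1 : (((sec b : Jmod A I hright 𝔟) : Aᵐᵒᵖ).unop :
          (idealCon A I hright).Quotient) = (b : (idealCon A I hright).Quotient) :=
        congrArg Subtype.val (hsec b)
      rw [hb1, hc']
      rw [show ((s • b : 𝔟) : (idealCon A I hright).Quotient) = s • (b : (idealCon A I hright).Quotient) from rfl]
      rw [← op_unop s, op_smul_eq_mul, unop_op]
    have hτ : τ A I hright (op c) = s := by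
      rw [τ_apply, unop_op, hc', op_unop]
    calc i1 (s • b) = i0 (op c • sec b) := hind _ _ (by rw [hsec, hgs])
      _ = τ A I hright (op c) • i0 (sec b) := hi0_smul _ _
      _ = s • i1 b := by rw [hτ]
  set iL : 𝔟 →ₗ[((idealCon A I hright).Quotient)ᵐᵒᵖ] FS A I hright 𝔟 :=
    { toFun := i1, map_add' := hadd, map_smul' := hsmul } with hiL
  set T : FS A I hright 𝔟 →ₗ[((idealCon A I hright).Quotient)ᵐᵒᵖ] 𝔟 :=
    Finsupp.linearCombination _ (g A I hright 𝔟) with hT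
  have hTρ : ∀ f : F A I hright 𝔟,
      ((T (ρF A I hright 𝔟 f) : 𝔟) : (idealCon A I hright).Quotient)
        = (((q A I hright 𝔟 f).unop : (idealCon A I hright).Quotient)) := by
    intro f
    induction f using Finsupp.induction_linear with
    | zero => simp
    | add f g ihf ihg =>
      simp only [map_add, Submodule.coe_add, unop_add, RingCon.coe_add, ihf, ihg]
    | single j r =>
      have h1 : ρF A I hright 𝔟 (Finsupp.single j r)
          = Finsupp.single j (τ A I hright r) := Finsupp.mapRange_single (hf := map_zero _)
      have h2 : q A I hright 𝔟 (Finsupp.single j r) = r * (j : Aᵐᵒᵖ) := by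
        rw [q, Finsupp.linearCombination_single, smul_eq_mul]
      rw [h1, h2, hT, Finsupp.linearCombination_single]
      rw [show ((τ A I hright r • g A I hright 𝔟 j : 𝔟) : (idealCon A I hright).Quotient)
        = τ A I hright r • ((g A I hright 𝔟 j : 𝔟) : (idealCon A I hright).Quotient) from rfl]
      rw [τ_apply, op_smul_eq_mul, unop_mul, RingCon.coe_mul]
      rfl
  have hTi : ∀ b : 𝔟, T (i1 b) = b := by
    intro b
    obtain ⟨f, hf⟩ := Submodule.Quotient.mk_surjective _ (σ (sec b))
    have h1 : i1 b = ρF A I hright 𝔟 f := by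
      rw [hi1]
      show ρM A I hright 𝔟 (σ (sec b)) = _
      rw [← hf, ρM_mk]
    apply Subtype.ext
    rw [h1, hTρ]
    have h2 : q A I hright 𝔟 f = ((sec b : Jmod A I hright 𝔟) : Aᵐᵒᵖ) := by
      rw [← qbar_mk, hf, hσ, qbar_sigma]
    rw [h2]
    exact congrArg Subtype.val (hsec b)
  exact Module.Projective.of_split iL T (LinearMap.ext hTi)
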